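/- If a structure category Δ contains a single non-identity bijection, then Δ contains all bijections between finite ordinals. -/
import Mathlib



/-- The element of `Fin (∑ i, k i)` determined by block `p.1` and offset `p.2`. -/
def sigmaToFin {n : ℕ} {k : Fin n → ℕ} (p : (i : Fin n) × Fin (k i)) : Fin (∑ i, k i) :=
  ⟨(∑ j ∈ Finset.univ.filter fun j => j < p.1, k j) + p.2.val, by
    have hsub := Finset.sum_le_sum_of_subset (f := k)
      (Finset.subset_univ (insert p.1 (Finset.univ.filter fun j => j < p.1)))
    rw [Finset.sum_insert (by simp)] at hsub
    have := p.2.isLt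
    omega⟩

/-- Decomposition of an element of `Fin (∑ i, k i)` into a block index and an offset. -/
def finToSigma {n : ℕ} {k : Fin n → ℕ} (p : Fin (∑ i, k i)) : (i : Fin n) × Fin (k i) :=
  (List.ofFn fun i => List.ofFn fun x : Fin (k i) =>
    (⟨i, x⟩ : (i : Fin n) × Fin (k i))).flatten.get (Fin.cast (by simp [Function.comp_def, List.sum_ofFn]) p)

/-- Coproduct of two functions between finite ordinals, acting blockwise. -/
def coprodMap {m₁ n₁ m₂ n₂ : ℕ} (f : Fin m₁ → Fin n₁) (g : Fin m₂ → Fin n₂) :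
    Fin (m₁ + m₂) → Fin (n₁ + n₂) :=
  finSumFinEquiv ∘ Sum.map f g ∘ finSumFinEquiv.symm

/-- The similarity component `θ'_{k₁,…,kₙ}` of `θ : [m] → [n]`. -/
def simComp {m n : ℕ} (θ : Fin m → Fin n) (k : Fin n → ℕ) :
    Fin (∑ i, k (θ i)) → Fin (∑ j, k j) :=
  fun p => sigmaToFin ⟨θ (finToSigma p).1, (finToSigma p).2⟩

/-- Cardinality of the fiber of `f` over `i`. -/
def fiberCard {m n : ℕ} (f : Fin m → Fin n) (i : Fin n) : ℕ :=
  (Finset.univ.filter fun x => f x = i).card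

/-- A structure category: a wide subcategory of `FinOrd` closed under coproducts of
morphisms and under similarity components. -/
structure IsStructCat (Δ : ∀ m n : ℕ, Set (Fin m → Fin n)) : Prop where
  id_mem : ∀ n, id ∈ Δ n n
  comp_mem : ∀ {k m n : ℕ} (f : Fin k → Fin m) (g : Fin m → Fin n),
    f ∈ Δ k m → g ∈ Δ m n → g ∘ f ∈ Δ k n
  coprod_mem : ∀ {m₁ n₁ m₂ n₂ : ℕ} (f : Fin m₁ → Fin n₁) (g : Fin m₂ → Fin n₂),
    f ∈ Δ m₁ n₁ → g ∈ Δ m₂ n₂ → coprodMap f g ∈ Δ (m₁ + m₂) (n₁ + n₂)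
  sim_mem : ∀ {m n : ℕ} (θ : Fin m → Fin n), θ ∈ Δ m n → ∀ k : Fin n → ℕ,
    simComp θ k ∈ Δ (∑ i, k (θ i)) (∑ j, k j)

/-- A structure monoid: a subset of ℕ containing 1 and closed under `I`-indexed sums. -/
def IsStructMonoid (I : Set ℕ) : Prop :=
  1 ∈ I ∧ ∀ k ∈ I, ∀ a : Fin k → ℕ, (∀ i, a i ∈ I) → (∑ i, a i) ∈ I

/-- `Δ^I` : functions all of whose fibers have cardinality in `I`. -/
def DeltaUp (I : Set ℕ) : ∀ m n : ℕ, Set (Fin m → Fin n) :=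
  fun _ _ => {f | ∀ i, fiberCard f i ∈ I}

/-- The unique map `[n] → [1]`. -/
def bang (n : ℕ) : Fin n → Fin 1 := fun _ => 0

/-- `Δ_I` : the smallest structure category containing the maps `[n] → [1]` for `n ∈ I`. -/
def GenDelta (I : Set ℕ) : ∀ m n : ℕ, Set (Fin m → Fin n) := fun m n =>
  {f | ∀ Δ : ∀ m n : ℕ, Set (Fin m → Fin n), IsStructCat Δ →
    (∀ k ∈ I, bang k ∈ Δ k 1) → f ∈ Δ m n}

section Aux

lemma sigmaToFin_val {n : ℕ} {k : Fin n → ℕ} (p : (i : Fin n) × Fin (k i)) :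
    (sigmaToFin p).val = (∑ j ∈ Finset.univ.filter fun j => j < p.1, k j) + p.2.val := rfl

lemma blocksum_mono {n : ℕ} (k : Fin n → ℕ) {i i' : Fin n} (h : i < i') :
    (∑ j ∈ Finset.univ.filter fun j => j < i, k j) + k i
      ≤ ∑ j ∈ Finset.univ.filter fun j => j < i', k j := by
  have hsub : insert i (Finset.univ.filter fun j => j < i)
      ⊆ Finset.univ.filter fun j => j < i' := by
    intro t ht
    simp only [Finset.mem_insert, Finset.mem_filter, Finset.mem_univ, true_and] at ht ⊢
    rcases ht with rfl | ht
    · exact h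
    · exact ht.trans h
  have := Finset.sum_le_sum_of_subset (f := k) hsub
  rw [Finset.sum_insert (by simp)] at this
  omega

lemma sigmaToFin_injective {n : ℕ} {k : Fin n → ℕ} :
    Function.Injective (sigmaToFin (n := n) (k := k)) := by
  rintro ⟨i, x⟩ ⟨i', x'⟩ h
  have hv := congrArg Fin.val h
  rw [sigmaToFin_val, sigmaToFin_val] at hv
  simp only at hv
  rcases lt_trichotomy i i' with hi | rfl | hi
  · exfalso; have h1 := blocksum_mono k hi; have := x.isLt; omega
  · have hx : x = x' := Fin.ext (by omega)
    rw [hx]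
  · exfalso; have h1 := blocksum_mono k hi; have := x'.isLt; omega

lemma sigmaToFin_emb {n : ℕ} {k : Fin (n + 1) → ℕ}
    (q : (i : Fin n) × Fin (k i.succ)) :
    (sigmaToFin (k := k) ⟨q.1.succ, q.2⟩).val
      = k 0 + (sigmaToFin (k := fun i => k i.succ) q).val := by
  obtain ⟨i, x⟩ := q
  rw [sigmaToFin_val, sigmaToFin_val]
  simp only
  have : (∑ j ∈ Finset.univ.filter fun j => j < i.succ, k j)
      = k 0 + ∑ j ∈ Finset.univ.filter fun j => j < i, k j.succ := by
    rw [Finset.sum_filter, Finset.sum_filter, Fin.sum_univ_succ]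
    simp [Fin.succ_lt_succ_iff, Fin.succ_pos]
  omega

lemma getElem_idx_congr {α : Type*} (l : List α) {i j : ℕ} (h : i = j) {hi : i < l.length} :
    l[i] = l[j]'(h ▸ hi) := by subst h; rfl

lemma flatten_getElem_spec : ∀ (n : ℕ) (k : Fin n → ℕ) (idx : ℕ)
    (h : idx < ((List.ofFn fun i => List.ofFn fun x : Fin (k i) =>
      (⟨i, x⟩ : (i : Fin n) × Fin (k i))).flatten).length),
    (sigmaToFin (((List.ofFn fun i => List.ofFn fun x : Fin (k i) =>
      (⟨i, x⟩ : (i : Fin n) × Fin (k i))).flatten)[idx])).val = idx := by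
  intro n
  induction n with
  | zero => intro k idx h; simp at h
  | succ n ih =>
    intro k idx h
    have hsplit : (List.ofFn fun i : Fin (n + 1) => List.ofFn fun x : Fin (k i) =>
          (⟨i, x⟩ : (i : Fin (n + 1)) × Fin (k i))).flatten
        = (List.ofFn fun x : Fin (k 0) => (⟨0, x⟩ : (i : Fin (n + 1)) × Fin (k i)))
          ++ (List.ofFn fun i : Fin n => List.ofFn fun x : Fin (k i.succ) =>
            (⟨i.succ, x⟩ : (i : Fin (n + 1)) × Fin (k i))).flatten := by
      rw [List.ofFn_succ, List.flatten_cons]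
    rw [List.getElem_of_eq hsplit]
    have hemb : (List.ofFn fun i : Fin n => List.ofFn fun x : Fin (k i.succ) =>
          (⟨i.succ, x⟩ : (i : Fin (n + 1)) × Fin (k i))).flatten
        = ((List.ofFn fun i : Fin n => List.ofFn fun x : Fin (k i.succ) =>
          (⟨i, x⟩ : (i : Fin n) × Fin (k i.succ))).flatten).map
            (fun q => (⟨q.1.succ, q.2⟩ : (i : Fin (n + 1)) × Fin (k i))) := by
      rw [List.map_flatten, List.map_ofFn]
      refine congrArg _ (congrArg List.ofFn (funext fun (i : Fin n) => ?_))
      simp [List.map_ofFn, Function.comp_def]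
    have hlen : ((List.ofFn fun i : Fin n => List.ofFn fun x : Fin (k i.succ) =>
        (⟨i, x⟩ : (i : Fin n) × Fin (k i.succ))).flatten).length = ∑ i : Fin n, k i.succ := by
      simp [Function.comp_def, List.sum_ofFn]
    have hlen' : idx < k 0 + ∑ i : Fin n, k i.succ := by
      have := h
      simp [Function.comp_def, List.sum_ofFn, Fin.sum_univ_succ] at this
      omega
    by_cases h0 : idx < k 0
    · rw [List.getElem_append_left (by simpa using h0)]
      rw [List.getElem_ofFn]
      rw [sigmaToFin_val]
      have : (Finset.univ.filter fun j : Fin (n + 1) => j < (0 : Fin (n + 1))) = ∅ := by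
        ext t; simp [Fin.not_lt_zero]
      simp [this]
    · rw [List.getElem_append_right (by simpa using h0)]
      have hlt : idx - (List.ofFn fun x : Fin (k 0) =>
          (⟨0, x⟩ : (i : Fin (n + 1)) × Fin (k i))).length
          < ((List.ofFn fun i : Fin n => List.ofFn fun x : Fin (k i.succ) =>
            (⟨i, x⟩ : (i : Fin n) × Fin (k i.succ))).flatten).length := by
        rw [hlen]; simp only [List.length_ofFn]; omega
      rw [List.getElem_of_eq hemb, List.getElem_map]
      rw [getElem_idx_congr _ (show idx - (List.ofFn fun x : Fin (k 0) =>
            (⟨0, x⟩ : (i : Fin (n + 1)) × Fin (k i))).length = idx - k 0 by simp)]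
      rw [sigmaToFin_emb]
      rw [ih (fun i => k i.succ) (idx - k 0) (by rw [hlen]; omega)]
      omega

lemma sigmaToFin_finToSigma {n : ℕ} {k : Fin n → ℕ} (p : Fin (∑ i, k i)) :
    sigmaToFin (finToSigma p) = p := by
  apply Fin.ext
  unfold finToSigma
  rw [List.get_eq_getElem]
  exact flatten_getElem_spec n k p.val _

lemma finToSigma_sigmaToFin {n : ℕ} {k : Fin n → ℕ} (q : (i : Fin n) × Fin (k i)) :
    finToSigma (sigmaToFin q) = q :=
  sigmaToFin_injective (sigmaToFin_finToSigma (sigmaToFin q))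

lemma simComp_sigmaToFin {m n : ℕ} (θ : Fin m → Fin n) (k : Fin n → ℕ)
    (q : (i : Fin m) × Fin (k (θ i))) :
    simComp θ k (sigmaToFin (k := fun i => k (θ i)) q) = sigmaToFin ⟨θ q.1, q.2⟩ := by
  unfold simComp
  rw [finToSigma_sigmaToFin]

lemma mem_cast {Δ : ∀ m n : ℕ, Set (Fin m → Fin n)} {a b c d : ℕ} (hab : a = b) (hcd : c = d)
    {u : Fin a → Fin c} {v : Fin b → Fin d}
    (huv : ∀ x : Fin b, (v x).val = (u (Fin.cast hab.symm x)).val)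
    (h : u ∈ Δ a c) : v ∈ Δ b d := by
  subst hab; subst hcd
  have hvu : v = u := funext fun x => Fin.ext (huv x)
  rwa [hvu]

lemma coprodMap_val {m₁ n₁ m₂ n₂ : ℕ} (f : Fin m₁ → Fin n₁) (g : Fin m₂ → Fin n₂)
    (x : Fin (m₁ + m₂)) :
    (coprodMap f g x).val = if h : x.val < m₁ then (f ⟨x.val, h⟩).val
      else n₁ + (g ⟨x.val - m₁, by have := x.isLt; omega⟩).val := by
  induction x using Fin.addCases with
  | left i => simp [coprodMap, i.isLt]
  | right i =>
    have : ¬ (m₁ + i.val < m₁) := by omega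
    simp [coprodMap, this]

lemma swap_two_mem {Δ : ∀ m n : ℕ, Set (Fin m → Fin n)} (hΔ : IsStructCat Δ)
    {m : ℕ} {f : Fin m → Fin m} (hf : Function.Bijective f) (hne : f ≠ id)
    (hmem : f ∈ Δ m m) : ⇑(Equiv.swap (0 : Fin 2) 1) ∈ Δ 2 2 := by
  classical
  have hS : (Finset.univ.filter fun x => f x ≠ x).Nonempty := by
    by_contra hS
    apply hne
    funext x
    by_contra hx
    exact hS ⟨x, by simp only [Finset.mem_filter, Finset.mem_univ, true_and]; exact hx⟩
  set S := Finset.univ.filter fun x => f x ≠ x with hSdef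
  set j := S.min' hS with hjdef
  have hj : f j ≠ j := by
    have h := Finset.min'_mem S hS
    exact (Finset.mem_filter.mp h).2
  have hmin : ∀ t : Fin m, t < j → f t = t := by
    intro t ht
    by_contra h
    have : j ≤ t := S.min'_le t (by simp [hSdef, h])
    exact absurd ht (not_lt.mpr this)
  have hb : j < f j := by
    have h1 : f (f j) ≠ f j := fun h => hj (hf.injective h)
    have h2 : j ≤ f j := S.min'_le _ (by simp [hSdef, h1])
    exact lt_of_le_of_ne h2 (Ne.symm hj)
  obtain ⟨j', hj'⟩ := hf.surjective j
  have hjj' : j < j' := by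
    have hne' : f j' ≠ j' := by
      intro h
      rw [hj'] at h
      rw [← h] at hj'
      exact hj hj'
    have h1 : j ≤ j' := S.min'_le _ (by simp [hSdef, hne'])
    rcases lt_or_eq_of_le h1 with h2 | h2
    · exact h2
    · exfalso; rw [← h2] at hj'; exact hj hj'
  set k : Fin m → ℕ := fun i => if i = j ∨ i = f j then 1 else 0 with hkdef
  have hkj : k j = 1 := by simp [hkdef]
  have hkfj : k (f j) = 1 := by simp [hkdef]
  have hkpt : ∀ i, k i = (if i = j then 1 else 0) + (if i = f j then 1 else 0) := by
    intro i
    by_cases h1 : i = j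
    · subst h1; simp [hkdef, hb.ne]
    · by_cases h2 : i = f j <;> simp [hkdef, h1, h2, hj]
  have hk2 : ∑ i, k i = 2 := by
    calc ∑ i, k i = ∑ i, ((if i = j then 1 else 0) + (if i = f j then 1 else 0)) :=
          Finset.sum_congr rfl fun i _ => hkpt i
      _ = 2 := by
          rw [Finset.sum_add_distrib, Finset.sum_ite_eq', Finset.sum_ite_eq']
          simp
  have hk1 : ∑ i, k (f i) = 2 := by
    rw [Fintype.sum_bijective f hf _ k (fun _ => rfl)]
    exact hk2
  have hsim := hΔ.sim_mem f hmem k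
  refine mem_cast hk1 hk2 (fun x => ?_) hsim
  set y : Fin (∑ i, k (f i)) := Fin.cast hk1.symm x with hydef
  have hyx : y.val = x.val := rfl
  by_cases hx : x.val = 0
  · have hsum0 : (∑ t ∈ Finset.univ.filter fun t => t < j, k (f t)) = 0 := by
      apply Finset.sum_eq_zero
      intro t ht
      simp only [Finset.mem_filter, Finset.mem_univ, true_and] at ht
      rw [hmin t ht]
      have h1 : t ≠ j := ne_of_lt ht
      have h2 : t ≠ f j := by
        intro h
        rw [h] at ht
        exact absurd ht (not_lt.mpr hb.le)
      simp [hkdef, h1, h2]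
    have hy0 : y = sigmaToFin (k := fun i => k (f i)) ⟨j, ⟨0, by simp [hkfj]⟩⟩ := by
      apply Fin.ext
      rw [sigmaToFin_val]
      simp only
      rw [hsum0, hyx, hx]
    have hswap : (Equiv.swap (0 : Fin 2) 1 x).val = 1 := by
      have hx0 : x = 0 := Fin.ext hx
      rw [hx0, Equiv.swap_apply_left]
      rfl
    rw [hswap, hy0, simComp_sigmaToFin, sigmaToFin_val]
    simp only
    have hsum1 : (∑ t ∈ Finset.univ.filter fun t => t < f j, k t) = 1 := by
      have hcong : ∀ t ∈ Finset.univ.filter fun t => t < f j, k t = if t = j then 1 else 0 := by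
        intro t ht
        simp only [Finset.mem_filter, Finset.mem_univ, true_and] at ht
        have h2 : t ≠ f j := ne_of_lt ht
        by_cases h1 : t = j <;> simp [hkdef, h1, h2]
      rw [Finset.sum_congr rfl hcong, Finset.sum_ite_eq']
      simp [hb]
    rw [hsum1]
  · have hx1 : x.val = 1 := by have := x.isLt; omega
    have hkfj' : k (f j') = 1 := by rw [hj']; exact hkj
    have hsum1 : (∑ t ∈ Finset.univ.filter fun t => t < j', k (f t)) = 1 := by
      have hcong : ∀ t ∈ Finset.univ.filter fun t => t < j', k (f t)
          = if t = j then 1 else 0 := by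
        intro t ht
        simp only [Finset.mem_filter, Finset.mem_univ, true_and] at ht
        have h1 : f t ≠ j := by
          intro h
          have := hf.injective (h.trans hj'.symm)
          rw [this] at ht
          exact absurd ht (lt_irrefl _)
        by_cases h2 : t = j
        · subst h2; simp [hkdef]
        · have h3 : f t ≠ f j := fun h => h2 (hf.injective h)
          simp [hkdef, h1, h2, h3]
      rw [Finset.sum_congr rfl hcong, Finset.sum_ite_eq']
      simp [hjj']
    have hy1 : y = sigmaToFin (k := fun i => k (f i)) ⟨j', ⟨0, by simp [hkfj']⟩⟩ := by
      apply Fin.ext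
      rw [sigmaToFin_val]
      simp only
      rw [hsum1, hyx, hx1]
    have hswap : (Equiv.swap (0 : Fin 2) 1 x).val = 0 := by
      have hx0 : x = 1 := Fin.ext hx1
      rw [hx0, Equiv.swap_apply_right]
      rfl
    rw [hswap, hy1, simComp_sigmaToFin, sigmaToFin_val]
    simp only
    have hsum0 : (∑ t ∈ Finset.univ.filter fun t => t < f j', k t) = 0 := by
      apply Finset.sum_eq_zero
      intro t ht
      simp only [Finset.mem_filter, Finset.mem_univ, true_and, hj'] at ht
      have h1 : t ≠ j := ne_of_lt ht
      have h2 : t ≠ f j := by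
        intro h
        rw [h] at ht
        exact absurd ht (not_lt.mpr (le_of_lt hb))
      simp [hkdef, h1, h2]
    rw [hsum0]

lemma adjSwap_mem {Δ : ∀ m n : ℕ, Set (Fin m → Fin n)} (hΔ : IsStructCat Δ)
    (hsw : ⇑(Equiv.swap (0 : Fin 2) 1) ∈ Δ 2 2) {n : ℕ} (i : ℕ) (h : i + 2 ≤ n) :
    ⇑(Equiv.swap (⟨i, by omega⟩ : Fin n) ⟨i + 1, by omega⟩) ∈ Δ n n := by
  have h1 := hΔ.coprod_mem _ _ (hΔ.id_mem i) hsw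
  have h2 := hΔ.coprod_mem _ _ h1 (hΔ.id_mem (n - (i + 2)))
  refine mem_cast (by omega) (by omega) (fun x => ?_) h2
  have hx := x.isLt
  have hswv : ∀ z : Fin 2, ((Equiv.swap (0 : Fin 2) 1) z).val = 1 - z.val := by decide
  rw [coprodMap_val]
  simp only [Fin.coe_cast]
  by_cases hc : x.val < i + 2
  · rw [dif_pos hc, coprodMap_val]
    by_cases hc2 : x.val < i
    · rw [dif_pos hc2]
      rw [Equiv.swap_apply_of_ne_of_ne (by simp [Fin.ext_iff]; omega)
        (by simp [Fin.ext_iff]; omega)]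
      simp
    · rw [dif_neg hc2, hswv]
      simp only [id_eq]
      by_cases hc3 : x.val = i
      · rw [show x = ⟨i, by omega⟩ from Fin.ext hc3, Equiv.swap_apply_left]
        simp only
        omega
      · have hc4 : x.val = i + 1 := by omega
        rw [show x = ⟨i + 1, by omega⟩ from Fin.ext hc4, Equiv.swap_apply_right]
        simp only
        omega
  · rw [dif_neg hc]
    rw [Equiv.swap_apply_of_ne_of_ne (by simp [Fin.ext_iff]; omega)
      (by simp [Fin.ext_iff]; omega)]
    simp only [id_eq]
    omega

lemma anySwap_mem {Δ : ∀ m n : ℕ, Set (Fin m → Fin n)} (hΔ : IsStructCat Δ)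
    (hsw : ⇑(Equiv.swap (0 : Fin 2) 1) ∈ Δ 2 2) {n : ℕ} :
    ∀ (d : ℕ) (a b : Fin n), a < b → b.val = a.val + 1 + d →
      ⇑(Equiv.swap a b) ∈ Δ n n := by
  intro d
  induction d with
  | zero =>
    intro a b hab hv
    have h2 : a.val + 2 ≤ n := by have := b.isLt; omega
    have hadj := adjSwap_mem hΔ hsw a.val h2
    have ea : (⟨a.val, by omega⟩ : Fin n) = a := Fin.ext rfl
    have eb : (⟨a.val + 1, by omega⟩ : Fin n) = b := Fin.ext (show a.val + 1 = b.val by omega)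
    rwa [ea, eb] at hadj
  | succ d ih =>
    intro a b hab hv
    have hbn := b.isLt
    set b' : Fin n := ⟨a.val + 1 + d, by omega⟩ with hb'def
    have hb'v : b'.val = a.val + 1 + d := rfl
    have hab' : a < b' := by rw [Fin.lt_def, hb'v]; omega
    have h1 := ih a b' hab' hb'v
    have h2 : ⇑(Equiv.swap b' b) ∈ Δ n n := by
      have h3 : b'.val + 2 ≤ n := by omega
      have hadj := adjSwap_mem hΔ hsw b'.val h3
      have ea : (⟨b'.val, by omega⟩ : Fin n) = b' := Fin.ext rfl
      have eb : (⟨b'.val + 1, by omega⟩ : Fin n) = b := Fin.ext (show b'.val + 1 = b.val by omega)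
      rwa [ea, eb] at hadj
    have hne1 : a ≠ b' := ne_of_lt hab'
    have hne2 : a ≠ b := ne_of_lt hab
    have key : Equiv.swap a b = Equiv.swap b' b * Equiv.swap a b' * Equiv.swap b' b := by
      rw [Equiv.swap_mul_swap_mul_swap hne1 hne2]
      exact Equiv.swap_comm a b
    rw [key]
    have hc1 := hΔ.comp_mem _ _ h2 h1
    have hc2 := hΔ.comp_mem _ _ hc1 h2
    have hfun : ⇑(Equiv.swap b' b * Equiv.swap a b' * Equiv.swap b' b)
        = ⇑(Equiv.swap b' b) ∘ (⇑(Equiv.swap a b') ∘ ⇑(Equiv.swap b' b)) := by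
      funext t
      simp [Equiv.Perm.mul_apply, Function.comp]
    rw [hfun]
    exact hc2

lemma swap_mem_of_ne {Δ : ∀ m n : ℕ, Set (Fin m → Fin n)} (hΔ : IsStructCat Δ)
    (hsw : ⇑(Equiv.swap (0 : Fin 2) 1) ∈ Δ 2 2) {n : ℕ} (x y : Fin n) (hxy : x ≠ y) :
    ⇑(Equiv.swap x y) ∈ Δ n n := by
  rcases lt_or_gt_of_ne hxy with h | h
  · exact anySwap_mem hΔ hsw (y.val - x.val - 1) x y h
      (by have := Fin.lt_def.mp h; omega)
  · rw [Equiv.swap_comm]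
    exact anySwap_mem hΔ hsw (x.val - y.val - 1) y x h
      (by have := Fin.lt_def.mp h; omega)

end Aux

/-- If a structure category contains a non-identity bijection, then it contains all
bijections between finite ordinals. -/
theorem stmt_5 (Δ : ∀ m n : ℕ, Set (Fin m → Fin n)) (hΔ : IsStructCat Δ)
    (m : ℕ) (f : Fin m → Fin m) (hf : Function.Bijective f) (hne : f ≠ id)
    (hmem : f ∈ Δ m m) :
    ∀ (n : ℕ) (g : Fin n → Fin n), Function.Bijective g → g ∈ Δ n n := by
  intro n g hg
  have hsw := swap_two_mem hΔ hf hne hmem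
  have hgσ : g = ⇑(Equiv.ofBijective g hg) := rfl
  rw [hgσ]
  refine Equiv.Perm.swap_induction_on (Equiv.ofBijective g hg) ?_ ?_
  · have h1 : ⇑(1 : Equiv.Perm (Fin n)) = id := rfl
    rw [h1]
    exact hΔ.id_mem n
  · intro σ x y hxy hσ
    have h1 : ⇑(Equiv.swap x y * σ) = ⇑(Equiv.swap x y) ∘ ⇑σ := rfl
    rw [h1]
    exact hΔ.comp_mem _ _ hσ (swap_mem_of_ne hΔ hsw x y hxy)
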